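/- Let p be a prime, d ≥ 1, and a_1,…,a_d ∈ F_p^×. Then the rational function f(a_1 x,…,a_d x) ∈ F_p(x) has no pole at x = 0, and its power series expansion at x = 0 is ∑_{k_1,…,k_d ≥ 1} a_1^{k_1−1}⋯a_d^{k_d−1} H_p(k_1,…,k_d) x^{k_1+⋯+k_d−d} ∈ F_p[[x]]; equivalently, for every k ≥ d the coefficient of x^{k−d} in this expansion equals ∑_{k_1,…,k_d ≥ 1, k_1+⋯+k_d=k} a_1^{k_1−1}⋯a_d^{k_d−1} H_p(k_1,…,k_d). -/

import Mathlib

open Finset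

/-- The inverse of `C c - C a * X` as a power series. -/
noncomputable def geomInv {K : Type*} [Field K] (c a : K) : PowerSeries K :=
  PowerSeries.mk fun k => c⁻¹ * (c⁻¹ * a) ^ k

lemma geomInv_mul {K : Type*} [Field K] (c a : K) (hc : c ≠ 0) :
    (PowerSeries.C c - PowerSeries.C a * PowerSeries.X) * geomInv c a = 1 := by
  ext n
  rw [sub_mul, map_sub, mul_assoc]
  cases n with
  | zero =>
    simp [geomInv, PowerSeries.coeff_zero_eq_constantCoeff, hc]
  | succ n =>
    rw [PowerSeries.coeff_C_mul, PowerSeries.coeff_C_mul, PowerSeries.coeff_succ_X_mul]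
    simp only [geomInv, PowerSeries.coeff_mk, PowerSeries.coeff_one, Nat.succ_ne_zero, if_false]
    rw [pow_succ']
    field_simp
    ring

lemma coe_inv_eq {K : Type*} [Field K] (c a : K) (hc : c ≠ 0) :
    (((RatFunc.C c - RatFunc.C a * RatFunc.X)⁻¹ : RatFunc K) : LaurentSeries K)
      = HahnSeries.ofPowerSeries ℤ K (geomInv c a) := by
  have h1 : ((RatFunc.C c - RatFunc.C a * RatFunc.X : RatFunc K) : LaurentSeries K)
      = HahnSeries.ofPowerSeries ℤ K
          (PowerSeries.C c - PowerSeries.C a * PowerSeries.X) := by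
    simp only [map_sub, map_mul, RatFunc.coe_X,
      HahnSeries.ofPowerSeries_C, HahnSeries.ofPowerSeries_X]
    have hC : ∀ r : K, ((RatFunc.C r : RatFunc K) : LaurentSeries K) = HahnSeries.C r := fun r => by
      rw [← RatFunc.algebraMap_C, ← IsScalarTower.algebraMap_apply]; simp
    rw [hC, hC]
  have h2 : ((RatFunc.C c - RatFunc.C a * RatFunc.X : RatFunc K) : LaurentSeries K)
      * HahnSeries.ofPowerSeries ℤ K (geomInv c a) = 1 := by
    rw [h1, ← map_mul, geomInv_mul c a hc, map_one]
  rw [map_inv₀]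
  exact inv_eq_of_mul_eq_one_right h2


/-- `f(x₁, …, x_d) = ∑_{0 < n₁ < ⋯ < n_d < p} 1/((n₁ - x₁) ⋯ (n_d - x_d))` in the rational
function field `𝔽_p(x)`. -/
noncomputable def f (p : ℕ) [Fact p.Prime] {d : ℕ} (x : Fin d → RatFunc (ZMod p)) :
    RatFunc (ZMod p) :=
  ∑ n ∈ Finset.univ.filter
      (fun n : Fin d → Fin p => (∀ i j : Fin d, i < j → n i < n j) ∧ ∀ i, (n i : ℕ) ≠ 0),
    ∏ i, (((n i : ℕ) : RatFunc (ZMod p)) - x i)⁻¹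

/-- The multiple harmonic sum `H_p(k₁, …, k_d) = ∑_{0 < n₁ < ⋯ < n_d < p} n₁^{-k₁} ⋯ n_d^{-k_d}`
in `𝔽_p = ℤ/pℤ`. -/
def H (p : ℕ) {d : ℕ} (k : Fin d → ℕ) : ZMod p :=
  ∑ n ∈ Finset.univ.filter
      (fun n : Fin d → Fin p => (∀ i j : Fin d, i < j → n i < n j) ∧ ∀ i, (n i : ℕ) ≠ 0),
    ∏ i, (((n i : ℕ) : ZMod p) ^ k i)⁻¹

/-- For a prime `p`, `d ≥ 1` and `a₁, …, a_d ∈ 𝔽_p^×`, the rational function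
`f(a₁x, …, a_d x)` has no pole at `x = 0` (its Laurent expansion at `0` has no negative-index
coefficients), and its power series expansion at `x = 0` is
`∑_{k₁,…,k_d ≥ 1} a₁^{k₁-1} ⋯ a_d^{k_d-1} H_p(k₁,…,k_d) x^{k₁+⋯+k_d-d}`:
for every `k ≥ d` the coefficient of `x^{k-d}` equals
`∑_{k₁+⋯+k_d=k, kⱼ ≥ 1} a₁^{k₁-1} ⋯ a_d^{k_d-1} H_p(k₁,…,k_d)`. -/
theorem f_expansion_at_zero (p : ℕ) [Fact p.Prime] (d : ℕ) (hd : 1 ≤ d)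
    (a : Fin d → ZMod p) (ha : ∀ i, a i ≠ 0) :
    (∀ n : ℤ, n < 0 →
      ((f p (fun i => RatFunc.C (a i) * RatFunc.X) : RatFunc (ZMod p)) :
        LaurentSeries (ZMod p)).coeff n = 0) ∧
    (∀ k : ℕ, d ≤ k →
      ((f p (fun i => RatFunc.C (a i) * RatFunc.X) : RatFunc (ZMod p)) :
        LaurentSeries (ZMod p)).coeff ((k : ℤ) - (d : ℤ))
        = ∑ ks ∈ (Finset.Nat.antidiagonalTuple d k).filter (fun ks => ∀ j, 1 ≤ ks j),
            (∏ i, a i ^ (ks i - 1)) * H p ks) := by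
  classical
  have hp := (Fact.out : p.Prime)
  set S : Finset (Fin d → Fin p) := Finset.univ.filter
      (fun n : Fin d → Fin p => (∀ i j : Fin d, i < j → n i < n j) ∧ ∀ i, (n i : ℕ) ≠ 0) with hS
  have hne : ∀ n ∈ S, ∀ i, (((n i : ℕ) : ZMod p)) ≠ 0 := by
    intro n hn i h0
    rw [hS, Finset.mem_filter] at hn
    have h1 : (n i : ℕ) ≠ 0 := hn.2.2 i
    have h2 : (n i : ℕ) < p := (n i).isLt
    have := Nat.le_of_dvd (Nat.pos_of_ne_zero h1)
      ((ZMod.natCast_eq_zero_iff _ _).mp h0)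
    omega
  set G : PowerSeries (ZMod p) :=
    ∑ n ∈ S, ∏ i, geomInv (((n i : ℕ) : ZMod p)) (a i) with hG
  have key : ((f p (fun i => RatFunc.C (a i) * RatFunc.X) : RatFunc (ZMod p)) :
      LaurentSeries (ZMod p)) = (G : LaurentSeries (ZMod p)) := by
    show _ = HahnSeries.ofPowerSeries ℤ (ZMod p) G
    rw [f, hG, ← hS, map_sum, map_sum]
    refine Finset.sum_congr rfl fun n hn => ?_
    rw [map_prod, map_prod]
    refine Finset.prod_congr rfl fun i _ => ?_
    have heq : (((n i : ℕ) : RatFunc (ZMod p)) - RatFunc.C (a i) * RatFunc.X)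
        = RatFunc.C (((n i : ℕ) : ZMod p)) - RatFunc.C (a i) * RatFunc.X := by
      rw [map_natCast]
    rw [heq]
    exact coe_inv_eq _ _ (hne n hn i)
  constructor
  · intro n hn
    rw [key, PowerSeries.coeff_coe, if_pos hn]
  · intro k hk
    have h1 : (k : ℤ) - (d : ℤ) = ((k - d : ℕ) : ℤ) := by
      push_cast [hk]; ring
    rw [key, h1, PowerSeries.coeff_coe, if_neg (not_lt.mpr (Int.natCast_nonneg _)), Int.natAbs_natCast]
    set m := k - d with hm
    rw [hG, map_sum]
    have hRHS : ∑ ks ∈ (Finset.Nat.antidiagonalTuple d k).filter (fun ks => ∀ j, 1 ≤ ks j),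
        (∏ i, a i ^ (ks i - 1)) * H p ks
        = ∑ n ∈ S, ∑ ks ∈ (Finset.Nat.antidiagonalTuple d k).filter (fun ks => ∀ j, 1 ≤ ks j),
            ∏ i, (a i ^ (ks i - 1) * (((n i : ℕ) : ZMod p) ^ ks i)⁻¹) := by
      rw [Finset.sum_comm]
      refine Finset.sum_congr rfl fun ks _ => ?_
      rw [H, ← hS, Finset.mul_sum]
      refine Finset.sum_congr rfl fun n _ => ?_
      rw [← Finset.prod_mul_distrib]
    rw [hRHS]
    refine Finset.sum_congr rfl fun n hn => ?_
    rw [PowerSeries.coeff_prod]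
    refine Finset.sum_nbij' (fun l j => l j + 1)
      (fun ks => Finsupp.equivFunOnFinite.symm (fun j => ks j - 1)) ?_ ?_ ?_ ?_ ?_
    · intro l hl
      rw [Finset.mem_finsuppAntidiag] at hl
      refine Finset.mem_filter.mpr ⟨Finset.Nat.mem_antidiagonalTuple.mpr ?_, fun j => le_add_self⟩
      rw [Finset.sum_add_distrib, hl.1, Finset.sum_const, Finset.card_univ, Fintype.card_fin,
        smul_eq_mul, mul_one]
      omega
    · intro ks hks
      rw [Finset.mem_filter, Finset.Nat.mem_antidiagonalTuple] at hks
      rw [Finset.mem_finsuppAntidiag]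
      refine ⟨?_, Finset.subset_univ _⟩
      have h2 : ∑ j, (ks j - 1) + ∑ _j : Fin d, 1 = ∑ j, ks j := by
        rw [← Finset.sum_add_distrib]
        exact Finset.sum_congr rfl fun j _ => by have := hks.2 j; omega
      have h3 : (Finset.univ.sum ⇑(Finsupp.equivFunOnFinite.symm (fun j => ks j - 1)))
          = ∑ j, (ks j - 1) := by
        refine Finset.sum_congr rfl fun j _ => ?_
        simp [Finsupp.equivFunOnFinite]
      rw [h3]
      simp only [Finset.sum_const, Finset.card_univ, Fintype.card_fin, smul_eq_mul,
        mul_one] at h2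
      omega
    · intro l hl
      ext j
      simp [Finsupp.equivFunOnFinite]
    · intro ks hks
      rw [Finset.mem_filter] at hks
      funext j
      have := hks.2 j
      simp [Finsupp.equivFunOnFinite]
      omega
    · intro l hl
      refine Finset.prod_congr rfl fun i _ => ?_
      rw [geomInv, PowerSeries.coeff_mk, Nat.add_sub_cancel, pow_succ, mul_inv, mul_pow,
        ← inv_pow]
      ring
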